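/- Let E be a complex inner product space, S ⊆ E a complete linear subspace, and B ∈ E with orthogonal decomposition B = B∥ + B⊥ (B∥ ∈ S the orthogonal projection of B onto S, B⊥ = B − B∥). Let c ∈ ℝ satisfy c ≥ 0 and c·‖B‖ ≥ ‖B∥‖. Then the infimum over A ∈ S of min{‖A‖, ‖B‖}·c + ‖A − B‖ equals ‖B‖, and it is attained at A = 0. -/

import Mathlib

open RCLike ComplexInnerProductSpace in
/-- Proposition A.1 (degenerate branch): with `Bpar` the orthogonal projection of `B`
onto the complete subspace `S`, `c ≥ 0` and `c·‖B‖ ≥ ‖Bpar‖`, the infimum over `A ∈ S`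
of `min{‖A‖,‖B‖}·c + ‖A - B‖` equals `‖B‖`, and it is attained at `A = 0`. -/
theorem flat_norm_distance_to_subspace_degenerate
    {E : Type*} [NormedAddCommGroup E] [InnerProductSpace ℂ E]
    (S : Submodule ℂ E) [CompleteSpace S] (B : E) (c : ℝ)
    (hc0 : 0 ≤ c)
    (Bpar Bperp : E)
    (hpar : Bpar = (S.orthogonalProjectionOnto B : E))
    (hperp : Bperp = B - Bpar)
    (hcB : ‖Bpar‖ ≤ c * ‖B‖) :
    (⨅ A : S, (min ‖(A : E)‖ ‖B‖ * c + ‖(A : E) - B‖)) = ‖B‖ ∧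
    min ‖(0 : E)‖ ‖B‖ * c + ‖(0 : E) - B‖
      = (⨅ A : S, (min ‖(A : E)‖ ‖B‖ * c + ‖(A : E) - B‖)) := by
  have key : ∀ A : S, ‖B‖ ≤ min ‖(A : E)‖ ‖B‖ * c + ‖(A : E) - B‖ := by
    intro A
    rcases le_total ‖(A : E)‖ ‖B‖ with h | h
    · rw [min_eq_left h]
      by_cases hB : B = 0
      · simp [hB]
        positivity
      have hBpos : (0 : ℝ) < ‖B‖ := norm_pos_iff.mpr hB
      have hperpmem : B - Bpar ∈ Sᗮ := by
        rw [hpar]; exact Submodule.sub_starProjection_mem_orthogonal B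
      have hinner : ⟪(A : E), B - Bpar⟫ = 0 :=
        (Submodule.mem_orthogonal S (B - Bpar)).1 hperpmem (A : E) A.2
      have hsplit : ⟪(A : E), B⟫ = ⟪(A : E), Bpar⟫ := by
        have := inner_sub_right (𝕜 := ℂ) (A : E) B Bpar
        rw [hinner] at this
        linear_combination -this
      have h1 : re ⟪(A : E), B⟫ ≤ ‖(A : E)‖ * ‖Bpar‖ := by
        rw [hsplit]; exact re_inner_le_norm _ _
      have h2 : re ⟪B - (A : E), B⟫ ≤ ‖(A : E) - B‖ * ‖B‖ := by
        rw [show ‖(A : E) - B‖ = ‖B - (A : E)‖ from norm_sub_rev _ _]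
        exact re_inner_le_norm _ _
      have h3 : re ⟪B - (A : E), B⟫ = ‖B‖ ^ 2 - re ⟪(A : E), B⟫ := by
        have := inner_sub_left (𝕜 := ℂ) B (A : E) B
        rw [this, map_sub, inner_self_eq_norm_sq]
      have hA : ‖(A : E)‖ * ‖Bpar‖ ≤ ‖(A : E)‖ * (c * ‖B‖) :=
        mul_le_mul_of_nonneg_left hcB (norm_nonneg _)
      nlinarith [norm_nonneg ((A : E) - B)]
    · rw [min_eq_right h]
      have hmin : ‖B - Bpar‖ ≤ ‖(A : E) - B‖ := by
        rw [hpar, ← Submodule.starProjection_apply, Submodule.starProjection_minimal, norm_sub_rev]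
        exact ciInf_le ⟨0, fun x ⟨y, hy⟩ => hy ▸ norm_nonneg _⟩ A
      have htri : ‖B‖ ≤ ‖Bpar‖ + ‖B - Bpar‖ := by
        calc ‖B‖ = ‖Bpar + (B - Bpar)‖ := by rw [add_sub_cancel]
          _ ≤ ‖Bpar‖ + ‖B - Bpar‖ := norm_add_le _ _
      linarith
  have hbdd : BddBelow (Set.range fun A : S => min ‖(A : E)‖ ‖B‖ * c + ‖(A : E) - B‖) :=
    ⟨‖B‖, fun x ⟨A, hA⟩ => hA ▸ key A⟩
  have h0 : min ‖((0 : S) : E)‖ ‖B‖ * c + ‖((0 : S) : E) - B‖ = ‖B‖ := by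
    simp [min_eq_left (norm_nonneg B)]
  have hle : (⨅ A : S, (min ‖(A : E)‖ ‖B‖ * c + ‖(A : E) - B‖)) ≤ ‖B‖ := by
    have := ciInf_le hbdd (0 : S)
    rwa [h0] at this
  have hge : ‖B‖ ≤ ⨅ A : S, (min ‖(A : E)‖ ‖B‖ * c + ‖(A : E) - B‖) := le_ciInf key
  constructor
  · exact le_antisymm hle hge
  · simpa using h0.trans (le_antisymm hle hge).symm
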